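/- The state space of the hypergraph H₄(19) — atoms {1,...,19} with blocks {1,2,3}, {1,4,5}, {1,6,7}, {2,8,9}, {2,10,11}, {3,12,13}, {3,14,15}, {4,8,12}, {4,10,14}, {5,9,13}, {5,11,16}, {6,8,15}, {6,11,17}, {7,9,18}, {7,10,19}, {12,16,18}, {13,17,19}, {14,17,18}, {15,16,19} — is affinely parametrized by (x,y) = (s(6), s(8)) ranging over the parallelogram {(x,y) : 0 ≤ x ≤ 2/3, 1/6 ≤ y ≤ 1/2, 1/2 ≤ x+y ≤ 5/6}; in particular it has exactly 4 extreme points: (0,1/2), (1/3,1/6), (2/3,1/6), (1/3,1/2). -/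

import Mathlib

set_option maxHeartbeats 1000000


/-- The 19 blocks of the hypergraph H₄(19) on atoms {1,...,19}. -/
def H4Blocks : Finset (Finset ℕ) :=
  { {1,2,3}, {1,4,5}, {1,6,7}, {2,8,9}, {2,10,11}, {3,12,13}, {3,14,15},
    {4,8,12}, {4,10,14}, {5,9,13}, {5,11,16}, {6,8,15}, {6,11,17},
    {7,9,18}, {7,10,19}, {12,16,18}, {13,17,19}, {14,17,18}, {15,16,19} }

/-- A state on H₄(19): nonnegative on the atoms, summing to 1 on every block. -/
def H4IsState (s : ℕ → ℝ) : Prop :=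
  (∀ a ∈ Finset.Icc 1 19, 0 ≤ s a) ∧ ∀ b ∈ H4Blocks, ∑ a ∈ b, s a = 1

/-- The state of H₄(19) with parameters `x = s 6`, `y = s 8`, via the explicit affine
formulas of the paper. -/
noncomputable def H4StateOf (x y : ℝ) : ℕ → ℝ := fun a =>
  if a = 1 then 2*y - 1/3
  else if a = 2 then 1 - 2*y
  else if a = 3 ∨ a = 12 ∨ a = 13 then 1/3
  else if a = 4 ∨ a = 5 then 2/3 - y
  else if a = 6 then x
  else if a = 7 then 4/3 - x - 2*y
  else if a = 8 ∨ a = 9 then y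
  else if a = 10 then 2/3 - x
  else if a = 11 then x + 2*y - 2/3
  else if a = 14 ∨ a = 18 then x + y - 1/3
  else if a = 15 ∨ a = 16 then 1 - x - y
  else if a = 17 then 5/3 - 2*x - 2*y
  else 2*x + 2*y - 1

/-- The parallelogram {0 ≤ x ≤ 2/3, 1/6 ≤ y ≤ 1/2, 1/2 ≤ x+y ≤ 5/6}. -/
def H4Par : Set (ℝ × ℝ) :=
  {p | 0 ≤ p.1 ∧ p.1 ≤ 2/3 ∧ 1/6 ≤ p.2 ∧ p.2 ≤ 1/2 ∧
       1/2 ≤ p.1 + p.2 ∧ p.1 + p.2 ≤ 5/6}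

private lemma combo_le {a b u v c : ℝ} (ha : 0 < a) (hb : 0 < b) (hab : a + b = 1)
    (hu : u ≤ c) (hv : v ≤ c) (h : a*u + b*v = c) : u = c ∧ v = c := by
  have h1 : 0 ≤ b*(c-v) := mul_nonneg hb.le (by linarith)
  have h2 : 0 ≤ a*(c-u) := mul_nonneg ha.le (by linarith)
  have h3 : a*(c-u) + b*(c-v) = 0 := by linear_combination c*hab - h
  have h4 : a*(c-u) = 0 := by linarith
  have h5 : b*(c-v) = 0 := by linarith
  constructor
  · rcases mul_eq_zero.1 h4 with h' | h'
    · exact absurd h' (ne_of_gt ha)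
    · linarith
  · rcases mul_eq_zero.1 h5 with h' | h'
    · exact absurd h' (ne_of_gt hb)
    · linarith

private lemma combo_ge {a b u v c : ℝ} (ha : 0 < a) (hb : 0 < b) (hab : a + b = 1)
    (hu : c ≤ u) (hv : c ≤ v) (h : a*u + b*v = c) : u = c ∧ v = c := by
  have h1 : 0 ≤ b*(v-c) := mul_nonneg hb.le (by linarith)
  have h2 : 0 ≤ a*(u-c) := mul_nonneg ha.le (by linarith)
  have h3 : a*(u-c) + b*(v-c) = 0 := by linear_combination h - c*hab
  have h4 : a*(u-c) = 0 := by linarith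
  have h5 : b*(v-c) = 0 := by linarith
  constructor
  · rcases mul_eq_zero.1 h4 with h' | h'
    · exact absurd h' (ne_of_gt ha)
    · linarith
  · rcases mul_eq_zero.1 h5 with h' | h'
    · exact absurd h' (ne_of_gt hb)
    · linarith

private lemma H4Par_convex : Convex ℝ H4Par := by
  intro p hp q hq a b ha hb hab
  obtain ⟨h1,h2,h3,h4,h5,h6⟩ := hp
  obtain ⟨g1,g2,g3,g4,g5,g6⟩ := hq
  simp only [H4Par, Set.mem_setOf_eq, Prod.fst_add, Prod.snd_add, Prod.smul_fst, Prod.smul_snd,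
    smul_eq_mul]
  refine ⟨?_,?_,?_,?_,?_,?_⟩ <;> nlinarith [mul_le_mul_of_nonneg_left h2 ha, mul_le_mul_of_nonneg_left g2 hb]

private lemma H4Par_eq_hull :
    H4Par = convexHull ℝ {((0:ℝ), (1/2:ℝ)), (1/3, 1/6), (2/3, 1/6), (1/3, 1/2)} := by
  apply Set.Subset.antisymm
  · intro p hp
    obtain ⟨h1,h2,h3,h4,h5,h6⟩ := hp
    set u : ℝ := 3/2 - 3*p.2 with hu
    set v : ℝ := 3*p.1 + 3*p.2 - 3/2 with hv
    have hu0 : 0 ≤ u := by simp only [hu]; linarith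
    have hu1 : u ≤ 1 := by simp only [hu]; linarith
    have hv0 : 0 ≤ v := by simp only [hv]; linarith
    have hv1 : v ≤ 1 := by simp only [hv]; linarith
    set w : Fin 4 → ℝ := ![(1-u)*(1-v), u*(1-v), (1-u)*v, u*v] with hw
    set z : Fin 4 → ℝ × ℝ := ![(0, 1/2), (1/3, 1/6), (1/3, 1/2), (2/3, 1/6)] with hz
    have hwnn : ∀ i ∈ (Finset.univ : Finset (Fin 4)), 0 ≤ w i := by
      intro i _
      fin_cases i <;> simp [hw] <;>
        exact mul_nonneg (by linarith) (by linarith)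
    have hwsum : ∑ i ∈ (Finset.univ : Finset (Fin 4)), w i = 1 := by
      simp [hw, Fin.sum_univ_four]; ring
    have hzmem : ∀ i ∈ (Finset.univ : Finset (Fin 4)), z i ∈
        ({((0:ℝ), (1/2:ℝ)), (1/3, 1/6), (2/3, 1/6), (1/3, 1/2)} : Set (ℝ × ℝ)) := by
      intro i _; fin_cases i <;> simp [hz]
    have hm := Finset.centerMass_mem_convexHull (Finset.univ : Finset (Fin 4)) hwnn
      (by rw [hwsum]; norm_num) hzmem
    have hcm : (Finset.univ : Finset (Fin 4)).centerMass w z = p := by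
      rw [Finset.centerMass, hwsum]
      simp only [hw, hz, Fin.sum_univ_four, Matrix.cons_val_zero, Matrix.cons_val_one,
        Matrix.head_cons, Matrix.cons_val_two, Matrix.tail_cons, Matrix.cons_val_three,
        Prod.smul_mk, smul_eq_mul, Prod.mk_add_mk, inv_one, one_smul]
      ext <;> simp only [hu, hv] <;> ring
    rwa [hcm] at hm
  · apply convexHull_min _ H4Par_convex
    intro q hq
    simp only [Set.mem_insert_iff, Set.mem_singleton_iff] at hq
    rcases hq with rfl | rfl | rfl | rfl <;>
      exact ⟨by norm_num, by norm_num, by norm_num, by norm_num, by norm_num, by norm_num⟩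

private lemma vertex_extreme (q : ℝ × ℝ) (hq : q ∈ H4Par)
    (hkey : ∀ r ∈ H4Par, ∀ t ∈ H4Par, ∀ a b : ℝ, 0 < a → 0 < b → a + b = 1 →
      a • r + b • t = q → r = q ∧ t = q) : q ∈ Set.extremePoints ℝ H4Par := by
  refine ⟨hq, ?_⟩
  intro r hr t ht hseg
  obtain ⟨a, b, ha, hb, hab, habq⟩ := hseg
  exact (hkey r hr t ht a b ha hb hab habq).1

/-- The state space of H₄(19) is affinely parametrized by `(x, y) = (s 6, s 8)` over
the parallelogram {0 ≤ x ≤ 2/3, 1/6 ≤ y ≤ 1/2, 1/2 ≤ x+y ≤ 5/6}; in particular it has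
exactly 4 extreme points (0,1/2), (1/3,1/6), (2/3,1/6), (1/3,1/2). -/
theorem H4_state_space :
    (∀ s : ℕ → ℝ, H4IsState s →
      (s 6, s 8) ∈ H4Par ∧ ∀ a ∈ Finset.Icc 1 19, s a = H4StateOf (s 6) (s 8) a) ∧
    (∀ p ∈ H4Par, H4IsState (H4StateOf p.1 p.2)) ∧
    Set.extremePoints ℝ H4Par =
      {(0, 1/2), (1/3, 1/6), (2/3, 1/6), (1/3, 1/2)} := by
  refine ⟨?_, ?_, ?_⟩
  · -- part 1
    intro s hs
    obtain ⟨hpos, hsum⟩ := hs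
    have n1 := hpos 1 (by decide)
    have n2 := hpos 2 (by decide)
    have n3 := hpos 3 (by decide)
    have n4 := hpos 4 (by decide)
    have n5 := hpos 5 (by decide)
    have n6 := hpos 6 (by decide)
    have n7 := hpos 7 (by decide)
    have n8 := hpos 8 (by decide)
    have n9 := hpos 9 (by decide)
    have n10 := hpos 10 (by decide)
    have n11 := hpos 11 (by decide)
    have n12 := hpos 12 (by decide)
    have n13 := hpos 13 (by decide)
    have n14 := hpos 14 (by decide)
    have n15 := hpos 15 (by decide)
    have n16 := hpos 16 (by decide)
    have n17 := hpos 17 (by decide)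
    have n18 := hpos 18 (by decide)
    have n19 := hpos 19 (by decide)
    have e1 : s 1 + (s 2 + s 3) = 1 := by
      have := hsum {1,2,3} (by decide)
      simpa [Finset.sum_insert, Finset.mem_insert] using this
    have e2 : s 1 + (s 4 + s 5) = 1 := by
      have := hsum {1,4,5} (by decide)
      simpa [Finset.sum_insert, Finset.mem_insert] using this
    have e3 : s 1 + (s 6 + s 7) = 1 := by
      have := hsum {1,6,7} (by decide)
      simpa [Finset.sum_insert, Finset.mem_insert] using this
    have e4 : s 2 + (s 8 + s 9) = 1 := by
      have := hsum {2,8,9} (by decide)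
      simpa [Finset.sum_insert, Finset.mem_insert] using this
    have e5 : s 2 + (s 10 + s 11) = 1 := by
      have := hsum {2,10,11} (by decide)
      simpa [Finset.sum_insert, Finset.mem_insert] using this
    have e6 : s 3 + (s 12 + s 13) = 1 := by
      have := hsum {3,12,13} (by decide)
      simpa [Finset.sum_insert, Finset.mem_insert] using this
    have e7 : s 3 + (s 14 + s 15) = 1 := by
      have := hsum {3,14,15} (by decide)
      simpa [Finset.sum_insert, Finset.mem_insert] using this
    have e8 : s 4 + (s 8 + s 12) = 1 := by
      have := hsum {4,8,12} (by decide)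
      simpa [Finset.sum_insert, Finset.mem_insert] using this
    have e9 : s 4 + (s 10 + s 14) = 1 := by
      have := hsum {4,10,14} (by decide)
      simpa [Finset.sum_insert, Finset.mem_insert] using this
    have e10 : s 5 + (s 9 + s 13) = 1 := by
      have := hsum {5,9,13} (by decide)
      simpa [Finset.sum_insert, Finset.mem_insert] using this
    have e11 : s 5 + (s 11 + s 16) = 1 := by
      have := hsum {5,11,16} (by decide)
      simpa [Finset.sum_insert, Finset.mem_insert] using this
    have e12 : s 6 + (s 8 + s 15) = 1 := by
      have := hsum {6,8,15} (by decide)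
      simpa [Finset.sum_insert, Finset.mem_insert] using this
    have e13 : s 6 + (s 11 + s 17) = 1 := by
      have := hsum {6,11,17} (by decide)
      simpa [Finset.sum_insert, Finset.mem_insert] using this
    have e14 : s 7 + (s 9 + s 18) = 1 := by
      have := hsum {7,9,18} (by decide)
      simpa [Finset.sum_insert, Finset.mem_insert] using this
    have e15 : s 7 + (s 10 + s 19) = 1 := by
      have := hsum {7,10,19} (by decide)
      simpa [Finset.sum_insert, Finset.mem_insert] using this
    have e16 : s 12 + (s 16 + s 18) = 1 := by
      have := hsum {12,16,18} (by decide)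
      simpa [Finset.sum_insert, Finset.mem_insert] using this
    have e17 : s 13 + (s 17 + s 19) = 1 := by
      have := hsum {13,17,19} (by decide)
      simpa [Finset.sum_insert, Finset.mem_insert] using this
    have e18 : s 14 + (s 17 + s 18) = 1 := by
      have := hsum {14,17,18} (by decide)
      simpa [Finset.sum_insert, Finset.mem_insert] using this
    have e19 : s 15 + (s 16 + s 19) = 1 := by
      have := hsum {15,16,19} (by decide)
      simpa [Finset.sum_insert, Finset.mem_insert] using this
    refine ⟨⟨by linarith, by linarith, by linarith, by linarith, by linarith, by linarith⟩, ?_⟩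
    intro a ha
    simp only [Finset.mem_Icc] at ha
    obtain ⟨ha1, ha2⟩ := ha
    interval_cases a <;> simp [H4StateOf] <;> linarith
  · -- part 2
    rintro ⟨x, y⟩ ⟨h1,h2,h3,h4,h5,h6⟩
    refine ⟨?_, ?_⟩
    · intro a ha
      simp only [Finset.mem_Icc] at ha
      obtain ⟨ha1, ha2⟩ := ha
      interval_cases a <;> simp [H4StateOf] <;> linarith
    · intro b hb
      simp only [H4Blocks, Finset.mem_insert, Finset.mem_singleton] at hb
      rcases hb with rfl|rfl|rfl|rfl|rfl|rfl|rfl|rfl|rfl|rfl|rfl|rfl|rfl|rfl|rfl|rfl|rfl|rfl|rfl <;>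
        simp [H4StateOf, Finset.sum_insert, Finset.mem_insert] <;> ring
  · -- part 3
    apply Set.Subset.antisymm
    · rw [H4Par_eq_hull]
      exact extremePoints_convexHull_subset
    · intro q hq
      simp only [Set.mem_insert_iff, Set.mem_singleton_iff] at hq
      rcases hq with rfl | rfl | rfl | rfl
      · refine vertex_extreme _ (by norm_num [H4Par]) ?_
        rintro ⟨r1,r2⟩ ⟨a1,a2,a3,a4,a5,a6⟩ ⟨t1,t2⟩ ⟨b1,b2,b3,b4,b5,b6⟩ a b ha hb hab habq
        simp only [Prod.smul_mk, smul_eq_mul, Prod.mk_add_mk, Prod.mk.injEq] at habq ⊢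
        obtain ⟨hx, hy⟩ := habq
        have H1 := combo_ge ha hb hab a1 b1 hx
        have H2 := combo_le ha hb hab a4 b4 hy
        exact ⟨⟨H1.1, H2.1⟩, ⟨H1.2, H2.2⟩⟩
      · refine vertex_extreme _ (by norm_num [H4Par]) ?_
        rintro ⟨r1,r2⟩ ⟨a1,a2,a3,a4,a5,a6⟩ ⟨t1,t2⟩ ⟨b1,b2,b3,b4,b5,b6⟩ a b ha hb hab habq
        simp only [Prod.smul_mk, smul_eq_mul, Prod.mk_add_mk, Prod.mk.injEq] at habq ⊢
        obtain ⟨hx, hy⟩ := habq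
        have H1 := combo_ge ha hb hab a3 b3 hy
        have hs : a*(r1+r2) + b*(t1+t2) = 1/2 := by linear_combination hx + hy
        have H2 := combo_ge ha hb hab a5 b5 hs
        constructor <;> constructor <;> linarith [H1.1, H1.2, H2.1, H2.2]
      · refine vertex_extreme _ (by norm_num [H4Par]) ?_
        rintro ⟨r1,r2⟩ ⟨a1,a2,a3,a4,a5,a6⟩ ⟨t1,t2⟩ ⟨b1,b2,b3,b4,b5,b6⟩ a b ha hb hab habq
        simp only [Prod.smul_mk, smul_eq_mul, Prod.mk_add_mk, Prod.mk.injEq] at habq ⊢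
        obtain ⟨hx, hy⟩ := habq
        have H1 := combo_le ha hb hab a2 b2 hx
        have H2 := combo_ge ha hb hab a3 b3 hy
        exact ⟨⟨H1.1, H2.1⟩, ⟨H1.2, H2.2⟩⟩
      · refine vertex_extreme _ (by norm_num [H4Par]) ?_
        rintro ⟨r1,r2⟩ ⟨a1,a2,a3,a4,a5,a6⟩ ⟨t1,t2⟩ ⟨b1,b2,b3,b4,b5,b6⟩ a b ha hb hab habq
        simp only [Prod.smul_mk, smul_eq_mul, Prod.mk_add_mk, Prod.mk.injEq] at habq ⊢
        obtain ⟨hx, hy⟩ := habq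
        have H1 := combo_le ha hb hab a4 b4 hy
        have hs : a*(r1+r2) + b*(t1+t2) = 5/6 := by linear_combination hx + hy
        have H2 := combo_le ha hb hab a6 b6 hs
        constructor <;> constructor <;> linarith [H1.1, H1.2, H2.1, H2.2]
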